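/- Consider the vector field f(x,y,v) = (−Γ(x,y)(1−y)x, (Υ(x,y)(1−y) − v)y, (b(Υ(x,y)(1−y) − v) + Γ(x,y)(2 − (6+a)(1−y)))v) on ℝ³, where Γ, Υ ∈ C¹. At a fixed point (x_c, 1, 0), the Jacobian ∇f(x_c,1,0) has eigenvalues 0, −Υ(x_c,1), and 2Γ(x_c,1), with eigenvectors (1,0,0), (−x_c Γ(x_c,1), Υ(x_c,1), 0), and (−x_c/2, −1, 2Γ(x_c,1)+Υ(x_c,1)) respectively. -/

import Mathlib

open Set

/-- The vector field of the 3-dimensional autonomous system. -/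
noncomputable def elasticField (Γ Υ : ℝ → ℝ → ℝ) (a b : ℝ)
    (p : ℝ × ℝ × ℝ) : ℝ × ℝ × ℝ :=
  (-Γ p.1 p.2.1 * (1 - p.2.1) * p.1,
   (Υ p.1 p.2.1 * (1 - p.2.1) - p.2.2) * p.2.1,
   (b * (Υ p.1 p.2.1 * (1 - p.2.1) - p.2.2)
      + Γ p.1 p.2.1 * (2 - (6 + a) * (1 - p.2.1))) * p.2.2)

/-- Spectral decomposition of the linearization at the fixed point (x_c, 1, 0). -/
theorem linearization_at_center_fixed_point
    (Γ Υ : ℝ → ℝ → ℝ) (a b xc : ℝ) (hxc : 0 < xc)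
    (hΓ : ContDiff ℝ 1 (fun p : ℝ × ℝ => Γ p.1 p.2))
    (hΥ : ContDiff ℝ 1 (fun p : ℝ × ℝ => Υ p.1 p.2)) :
    elasticField Γ Υ a b (xc, 1, 0) = 0 ∧
    (fderiv ℝ (elasticField Γ Υ a b) (xc, 1, 0)) (1, 0, 0)
      = (0 : ℝ) • ((1 : ℝ), (0 : ℝ), (0 : ℝ)) ∧
    (fderiv ℝ (elasticField Γ Υ a b) (xc, 1, 0)) (-xc * Γ xc 1, Υ xc 1, 0)
      = (-Υ xc 1) • (-xc * Γ xc 1, Υ xc 1, (0 : ℝ)) ∧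
    (fderiv ℝ (elasticField Γ Υ a b) (xc, 1, 0)) (-xc / 2, -1, 2 * Γ xc 1 + Υ xc 1)
      = (2 * Γ xc 1) • (-xc / 2, (-1 : ℝ), 2 * Γ xc 1 + Υ xc 1) := by
  have hGd : DifferentiableAt ℝ (fun q : ℝ × ℝ => Γ q.1 q.2) (xc, 1) :=
    (hΓ.differentiable one_ne_zero).differentiableAt
  have hUd : DifferentiableAt ℝ (fun q : ℝ × ℝ => Υ q.1 q.2) (xc, 1) :=
    (hΥ.differentiable one_ne_zero).differentiableAt
  set p0 : ℝ × ℝ × ℝ := (xc, 1, 0) with hp0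
  have hπ : HasFDerivAt (fun p : ℝ × ℝ × ℝ => (p.1, p.2.1))
      ((ContinuousLinearMap.fst ℝ ℝ (ℝ × ℝ)).prod
        ((ContinuousLinearMap.fst ℝ ℝ ℝ).comp (ContinuousLinearMap.snd ℝ ℝ (ℝ × ℝ)))) p0 :=
    HasFDerivAt.prodMk (hasFDerivAt_fst) (hasFDerivAt_fst.comp p0 hasFDerivAt_snd)
  have hG := hGd.hasFDerivAt.comp p0 hπ
  have hU := hUd.hasFDerivAt.comp p0 hπ
  have hx : HasFDerivAt (fun p : ℝ × ℝ × ℝ => p.1) (ContinuousLinearMap.fst ℝ ℝ (ℝ × ℝ)) p0 :=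
    hasFDerivAt_fst
  have hy : HasFDerivAt (fun p : ℝ × ℝ × ℝ => p.2.1)
      ((ContinuousLinearMap.fst ℝ ℝ ℝ).comp (ContinuousLinearMap.snd ℝ ℝ (ℝ × ℝ))) p0 :=
    hasFDerivAt_fst.comp p0 hasFDerivAt_snd
  have hv : HasFDerivAt (fun p : ℝ × ℝ × ℝ => p.2.2)
      ((ContinuousLinearMap.snd ℝ ℝ ℝ).comp (ContinuousLinearMap.snd ℝ ℝ (ℝ × ℝ))) p0 :=
    hasFDerivAt_snd.comp p0 hasFDerivAt_snd
  have h1 := (hG.neg.mul (hy.const_sub 1)).mul hx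
  have h2 := ((hU.mul (hy.const_sub 1)).sub hv).mul hy
  have h3 := ((((hU.mul (hy.const_sub 1)).sub hv).const_mul b).add
      (hG.mul (((hy.const_sub 1).const_mul (6 + a)).const_sub 2))).mul hv
  have hf := (HasFDerivAt.prodMk h1 (HasFDerivAt.prodMk h2 h3))
  have hf' : HasFDerivAt (elasticField Γ Υ a b) _ p0 := hf
  have hfe := hf'.fderiv
  refine ⟨?_, ?_, ?_, ?_⟩
  · simp [elasticField, hp0]
  all_goals
    rw [hfe]
    simp only [ContinuousLinearMap.prod_apply, ContinuousLinearMap.add_apply,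
      ContinuousLinearMap.smul_apply, ContinuousLinearMap.comp_apply,
      ContinuousLinearMap.coe_fst', ContinuousLinearMap.coe_snd',
      ContinuousLinearMap.neg_apply, smul_eq_mul, hp0, sub_self, zero_smul,
      Prod.smul_mk, Prod.mk.injEq]
    simp only [Function.comp, ContinuousLinearMap.zero_apply, ContinuousLinearMap.sub_apply,
      ContinuousLinearMap.prod_apply, ContinuousLinearMap.add_apply,
      ContinuousLinearMap.smul_apply, ContinuousLinearMap.comp_apply,
      ContinuousLinearMap.coe_fst', ContinuousLinearMap.coe_snd',
      ContinuousLinearMap.neg_apply, smul_eq_mul]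
    norm_num
    all_goals and_intros
    all_goals first | trivial | ring1 | (left; first | trivial | ring1)
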